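/- Let P be a probability distribution on a finite alphabet 𝒳 and let C₁, C₂, …, C_N be i.i.d. with law P. The probability that the sequence C^N fails the prefix condition — i.e., that there exists an index i with N/ln N ≤ i ≤ N such that the empirical distribution P̂_{C^i} of the prefix C₁,…,C_i satisfies ‖P − P̂_{C^i}‖₁ > 1/ln N — tends to zero as N → ∞. -/

import Mathlib

open scoped BigOperators

namespace Async

variable {X : Type*}

/-- `μ` is a probability distribution on a finite alphabet. -/
def IsDist {A : Type*} [Fintype A] (μ : A → ℝ) : Prop :=
  (∀ a, 0 ≤ μ a) ∧ ∑ a, μ a = 1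

open scoped Classical in
/-- Real-valued indicator of a proposition. -/
noncomputable def ind (p : Prop) : ℝ := if p then 1 else 0

open scoped Classical in
/-- Empirical distribution of the prefix of length `i` of a sequence of length `N`. -/
noncomputable def empPrefix {N : ℕ} (c : Fin N → X) (i : ℕ) (x : X) : ℝ :=
  ((Finset.univ.filter (fun j : Fin N => (j : ℕ) < i ∧ c j = x)).card : ℝ) / i

/-! ### Auxiliary lemmas -/

open Finset
open scoped Classical

lemma ind_nonneg (p : Prop) : 0 ≤ ind p := by unfold ind; split <;> norm_num
lemma ind_le_one (p : Prop) : ind p ≤ 1 := by unfold ind; split <;> norm_num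
lemma ind_of (p : Prop) (h : p) : ind p = 1 := by simp [ind, h]
lemma ind_of_not (p : Prop) (h : ¬ p) : ind p = 0 := by simp [ind, h]

lemma ind_le_ind {p q : Prop} (h : p → q) : ind p ≤ ind q := by
  by_cases hp : p
  · rw [ind_of _ hp, ind_of _ (h hp)]
  · rw [ind_of_not _ hp]; exact ind_nonneg q

lemma card_filter_lt (N i : ℕ) (h : i ≤ N) :
    ((Finset.univ : Finset (Fin N)).filter (fun j : Fin N => (j:ℕ) < i)).card = i := by
  have h2 : ((Finset.univ : Finset (Fin N)).filter (fun j : Fin N => (j:ℕ) < i))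
      = Finset.map ⟨Fin.castLE h, Fin.castLE_injective h⟩ Finset.univ := by
    ext j
    simp only [Finset.mem_filter, Finset.mem_univ, true_and, Finset.mem_map,
      Function.Embedding.coeFn_mk]
    constructor
    · intro hj; exact ⟨⟨j, hj⟩, rfl⟩
    · rintro ⟨k, rfl⟩; exact k.2
  rw [h2, Finset.card_map, Finset.card_univ, Fintype.card_fin]

lemma sum_pow_four {β : Type*} (J : Finset β) (f : β → ℝ) :
    (∑ j ∈ J, f j)^4 = ∑ j1 ∈ J, ∑ j2 ∈ J, ∑ j3 ∈ J, ∑ j4 ∈ J, f j1 * f j2 * f j3 * f j4 := by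
  simp only [pow_succ, pow_zero, one_mul, Finset.sum_mul, Finset.mul_sum]
  exact Finset.sum_congr rfl fun a _ => Finset.sum_congr rfl fun b _ =>
    Finset.sum_congr rfl fun c _ => Finset.sum_congr rfl fun d _ => by ring

lemma pairing {α : Type*} [DecidableEq α] (a b c d : α)
    (H : ∀ y, ((Finset.univ : Finset (Fin 4)).filter (fun k => ![a,b,c,d] k = y)).card ≠ 1) :
    (a = b ∧ c = d) ∨ (a = c ∧ b = d) ∨ (a = d ∧ b = c) := by
  have ha := H a; have hb := H b; have hc := H c; have hd := H d
  simp only [Finset.card_filter, Fin.sum_univ_four, Matrix.cons_val_zero, Matrix.cons_val_one,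
    Matrix.head_cons, Matrix.cons_val_two, Matrix.tail_cons, Matrix.cons_val_three] at ha hb hc hd
  by_cases hab : a = b <;> by_cases hac : a = c <;> by_cases had : a = d <;>
    by_cases hbc : b = c <;> by_cases hbd : b = d <;> by_cases hcd : c = d <;>
    simp_all [eq_comm]

section Moments
variable [Fintype X]

/-- `k`-th central moment of the indicator of the letter `x`. -/
noncomputable def mmu (P : X → ℝ) (x : X) (k : ℕ) : ℝ := ∑ y, P y * (ind (y = x) - P x) ^ k

lemma factorization (N : ℕ) (P : X → ℝ) (f : Fin N → X → ℝ) :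
    ∑ c : Fin N → X, ∏ j, (P (c j) * f j (c j)) = ∏ j, ∑ x, P x * f j x := by
  rw [Finset.prod_univ_sum (fun _ => (Finset.univ : Finset X)) (fun j x => P x * f j x),
    Fintype.piFinset_univ]

variable {P : X → ℝ}

lemma mmu_one (hP1 : ∑ a, P a = 1) (x : X) : mmu P x 1 = 0 := by
  simp only [mmu, pow_one, mul_sub]
  rw [Finset.sum_sub_distrib, ← Finset.sum_mul, hP1]
  have : ∑ y, P y * ind (y = x) = P x := by
    rw [Finset.sum_eq_single x]
    · simp [ind]
    · intro b _ hb; simp [ind_of_not _ hb]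
    · simp
  rw [this]; ring

lemma abs_mmu_le (hP0 : ∀ a, 0 ≤ P a) (hP1 : ∑ a, P a = 1) (x : X) (k : ℕ) :
    |mmu P x k| ≤ 1 := by
  have hx1 : P x ≤ 1 := by
    rw [← hP1]
    exact Finset.single_le_sum (fun y _ => hP0 y) (Finset.mem_univ x)
  have habs : ∀ y : X, |(ind (y = x) - P x) ^ k| ≤ 1 := by
    intro y
    rw [abs_pow]
    apply pow_le_one₀ (abs_nonneg _)
    rw [abs_sub_le_iff]
    constructor
    · have := ind_le_one (y = x); have := hP0 x; linarith
    · have := ind_nonneg (y = x); linarith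
  calc |mmu P x k| ≤ ∑ y, |P y * (ind (y = x) - P x) ^ k| := Finset.abs_sum_le_sum_abs _ _
    _ ≤ ∑ y, P y := by
        apply Finset.sum_le_sum
        intro y _
        rw [abs_mul, abs_of_nonneg (hP0 y)]
        calc P y * |(ind (y = x) - P x) ^ k| ≤ P y * 1 :=
          mul_le_mul_of_nonneg_left (habs y) (hP0 y)
          _ = P y := mul_one _
    _ = 1 := hP1

/-- expectation of a product over a 4-tuple of coordinates factorizes into moments -/
lemma tuple_exp (N : ℕ) (x : X) (t : Fin 4 → Fin N) :
    ∑ c : Fin N → X, (∏ j, P (c j)) * ∏ k, (ind (c (t k) = x) - P x)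
      = ∏ j : Fin N, mmu P x ((Finset.univ.filter (fun k => t k = j)).card) := by
  have hstep : ∀ c : Fin N → X, (∏ k, (ind (c (t k) = x) - P x))
      = ∏ j : Fin N, (ind (c j = x) - P x) ^ ((Finset.univ.filter (fun k => t k = j)).card) := by
    intro c
    rw [Finset.prod_comp (fun j : Fin N => (ind (c j = x) - P x)) t]
    apply Finset.prod_subset (Finset.subset_univ _)
    intro j _ hj
    have hcard : (Finset.univ.filter (fun k => t k = j)).card = 0 := by
      rw [Finset.card_eq_zero, Finset.filter_eq_empty_iff]
      intro k _
      intro hk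
      exact hj (hk ▸ Finset.mem_image_of_mem t (Finset.mem_univ k))
    rw [hcard, pow_zero]
  calc ∑ c : Fin N → X, (∏ j, P (c j)) * ∏ k, (ind (c (t k) = x) - P x)
      = ∑ c : Fin N → X, ∏ j, (P (c j) *
          (ind (c j = x) - P x) ^ ((Finset.univ.filter (fun k => t k = j)).card)) := by
        apply Finset.sum_congr rfl
        intro c _
        rw [hstep c, ← Finset.prod_mul_distrib]
    _ = ∏ j : Fin N, ∑ y, P y * (ind (y = x) - P x) ^
          ((Finset.univ.filter (fun k => t k = j)).card) :=
        factorization N P (fun j y =>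
          (ind (y = x) - P x) ^ ((Finset.univ.filter (fun k => t k = j)).card))
    _ = _ := rfl

lemma moment4 (hP0 : ∀ a, 0 ≤ P a) (hP1 : ∑ a, P a = 1) (N : ℕ) (x : X) (J : Finset (Fin N)) :
    ∑ c : Fin N → X, (∏ j, P (c j)) * (∑ j ∈ J, (ind (c j = x) - P x)) ^ 4
      ≤ 3 * (J.card : ℝ) ^ 2 := by
  have key : ∀ u ∈ J, ∑ v ∈ J, ind (u = v) = 1 := by
    intro u hu
    rw [Finset.sum_eq_single u]
    · exact ind_of _ rfl
    · intro v _ hv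
      exact ind_of_not _ (fun h => hv h.symm)
    · intro h; exact absurd hu h
  -- Step 1: expand the fourth power and exchange sums
  have step1 : ∑ c : Fin N → X, (∏ j, P (c j)) * (∑ j ∈ J, (ind (c j = x) - P x)) ^ 4
      = ∑ j1 ∈ J, ∑ j2 ∈ J, ∑ j3 ∈ J, ∑ j4 ∈ J, ∑ c : Fin N → X, (∏ j, P (c j)) *
        ((ind (c j1 = x) - P x) * (ind (c j2 = x) - P x) * (ind (c j3 = x) - P x) *
          (ind (c j4 = x) - P x)) := by
    calc ∑ c : Fin N → X, (∏ j, P (c j)) * (∑ j ∈ J, (ind (c j = x) - P x)) ^ 4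
        = ∑ c : Fin N → X, ∑ j1 ∈ J, ∑ j2 ∈ J, ∑ j3 ∈ J, ∑ j4 ∈ J, (∏ j, P (c j)) *
          ((ind (c j1 = x) - P x) * (ind (c j2 = x) - P x) * (ind (c j3 = x) - P x) *
            (ind (c j4 = x) - P x)) := by
          refine Finset.sum_congr rfl fun c _ => ?_
          rw [sum_pow_four]
          simp only [Finset.mul_sum]
      _ = _ := by
          rw [Finset.sum_comm]
          refine Finset.sum_congr rfl fun j1 _ => ?_
          rw [Finset.sum_comm]
          refine Finset.sum_congr rfl fun j2 _ => ?_
          rw [Finset.sum_comm]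
          refine Finset.sum_congr rfl fun j3 _ => ?_
          rw [Finset.sum_comm]
  -- Step 2: per-tuple expectation via moments
  have inner_eq : ∀ j1 j2 j3 j4 : Fin N,
      ∑ c : Fin N → X, (∏ j, P (c j)) *
        ((ind (c j1 = x) - P x) * (ind (c j2 = x) - P x) * (ind (c j3 = x) - P x) *
          (ind (c j4 = x) - P x))
      = ∏ j : Fin N, mmu P x ((Finset.univ.filter (fun k => ![j1,j2,j3,j4] k = j)).card) := by
    intro j1 j2 j3 j4
    rw [← tuple_exp N x ![j1,j2,j3,j4]]
    refine Finset.sum_congr rfl fun c _ => ?_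
    congr 1
    rw [Fin.prod_univ_four]
    norm_num
    rfl
  -- Step 3: per-tuple bound
  have tuple_bound : ∀ j1 j2 j3 j4 : Fin N,
      (∏ j : Fin N, mmu P x ((Finset.univ.filter (fun k => ![j1,j2,j3,j4] k = j)).card))
        ≤ ind (j1 = j2) * ind (j3 = j4) + ind (j1 = j3) * ind (j2 = j4)
          + ind (j1 = j4) * ind (j2 = j3) := by
    intro j1 j2 j3 j4
    have hR0 : ∀ p q : Prop, 0 ≤ ind p * ind q :=
      fun p q => mul_nonneg (ind_nonneg p) (ind_nonneg q)
    by_cases h1 : ∃ y, ((Finset.univ : Finset (Fin 4)).filter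
        (fun k => ![j1,j2,j3,j4] k = y)).card = 1
    · obtain ⟨y, hy⟩ := h1
      rw [Finset.prod_eq_zero (Finset.mem_univ y) (by rw [hy, mmu_one hP1])]
      have := hR0 (j1 = j2) (j3 = j4); have := hR0 (j1 = j3) (j2 = j4)
      have := hR0 (j1 = j4) (j2 = j3); linarith
    · push_neg at h1
      have hle1 : (∏ j : Fin N, mmu P x
          ((Finset.univ.filter (fun k => ![j1,j2,j3,j4] k = j)).card)) ≤ 1 := by
        refine le_trans (le_abs_self _) ?_
        rw [Finset.abs_prod]
        exact Finset.prod_le_one (fun j _ => abs_nonneg _)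
          (fun j _ => abs_mmu_le hP0 hP1 x _)
      rcases pairing j1 j2 j3 j4 h1 with ⟨h, h'⟩ | ⟨h, h'⟩ | ⟨h, h'⟩
      · have : ind (j1 = j2) * ind (j3 = j4) = 1 := by rw [ind_of _ h, ind_of _ h']; ring
        have := hR0 (j1 = j3) (j2 = j4); have := hR0 (j1 = j4) (j2 = j3); linarith
      · have : ind (j1 = j3) * ind (j2 = j4) = 1 := by rw [ind_of _ h, ind_of _ h']; ring
        have := hR0 (j1 = j2) (j3 = j4); have := hR0 (j1 = j4) (j2 = j3); linarith
      · have : ind (j1 = j4) * ind (j2 = j3) = 1 := by rw [ind_of _ h, ind_of _ h']; ring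
        have := hR0 (j1 = j2) (j3 = j4); have := hR0 (j1 = j3) (j2 = j4); linarith
  -- Step 4: counting
  have hT1 : ∑ j1 ∈ J, ∑ j2 ∈ J, ∑ j3 ∈ J, ∑ j4 ∈ J, ind (j1 = j2) * ind (j3 = j4)
      = (J.card : ℝ)^2 := by
    have inner : ∀ j1 ∈ J, ∀ j2 ∈ J, ∑ j3 ∈ J, ∑ j4 ∈ J, ind (j1 = j2) * ind (j3 = j4)
        = ind (j1 = j2) * (J.card : ℝ) := by
      intro j1 _ j2 _
      simp_rw [← Finset.mul_sum]
      congr 1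
      calc ∑ j3 ∈ J, ∑ j4 ∈ J, ind (j3 = j4) = ∑ j3 ∈ J, (1:ℝ) :=
            Finset.sum_congr rfl fun j3 h3 => key j3 h3
        _ = (J.card : ℝ) := by simp
    calc ∑ j1 ∈ J, ∑ j2 ∈ J, ∑ j3 ∈ J, ∑ j4 ∈ J, ind (j1 = j2) * ind (j3 = j4)
        = ∑ j1 ∈ J, ∑ j2 ∈ J, ind (j1 = j2) * (J.card : ℝ) := by
          refine Finset.sum_congr rfl fun j1 h1 => Finset.sum_congr rfl fun j2 h2 => ?_
          exact inner j1 h1 j2 h2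
      _ = ∑ j1 ∈ J, (J.card : ℝ) := by
          refine Finset.sum_congr rfl fun j1 h1 => ?_
          rw [← Finset.sum_mul, key j1 h1, one_mul]
      _ = (J.card : ℝ)^2 := by simp [sq]
  have hT2 : ∑ j1 ∈ J, ∑ j2 ∈ J, ∑ j3 ∈ J, ∑ j4 ∈ J, ind (j1 = j3) * ind (j2 = j4)
      = (J.card : ℝ)^2 := by
    have inner : ∀ j1 ∈ J, ∀ j2 ∈ J, ∑ j3 ∈ J, ∑ j4 ∈ J, ind (j1 = j3) * ind (j2 = j4)
        = 1 := by
      intro j1 h1 j2 h2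
      rw [← Finset.sum_mul_sum, key j1 h1, key j2 h2, one_mul]
    calc ∑ j1 ∈ J, ∑ j2 ∈ J, ∑ j3 ∈ J, ∑ j4 ∈ J, ind (j1 = j3) * ind (j2 = j4)
        = ∑ j1 ∈ J, ∑ j2 ∈ J, (1:ℝ) :=
          Finset.sum_congr rfl fun j1 h1 => Finset.sum_congr rfl fun j2 h2 => inner j1 h1 j2 h2
      _ = (J.card : ℝ)^2 := by simp [sq]
  have hT3 : ∑ j1 ∈ J, ∑ j2 ∈ J, ∑ j3 ∈ J, ∑ j4 ∈ J, ind (j1 = j4) * ind (j2 = j3)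
      = (J.card : ℝ)^2 := by
    have inner : ∀ j1 ∈ J, ∀ j2 ∈ J, ∑ j3 ∈ J, ∑ j4 ∈ J, ind (j1 = j4) * ind (j2 = j3)
        = 1 := by
      intro j1 h1 j2 h2
      have hc : ∀ j3 j4 : Fin N, ind (j1 = j4) * ind (j2 = j3) = ind (j2 = j3) * ind (j1 = j4) :=
        fun j3 j4 => mul_comm _ _
      simp_rw [hc]
      rw [← Finset.sum_mul_sum, key j2 h2, key j1 h1, one_mul]
    calc ∑ j1 ∈ J, ∑ j2 ∈ J, ∑ j3 ∈ J, ∑ j4 ∈ J, ind (j1 = j4) * ind (j2 = j3)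
        = ∑ j1 ∈ J, ∑ j2 ∈ J, (1:ℝ) :=
          Finset.sum_congr rfl fun j1 h1 => Finset.sum_congr rfl fun j2 h2 => inner j1 h1 j2 h2
      _ = (J.card : ℝ)^2 := by simp [sq]
  -- assemble
  rw [step1]
  calc ∑ j1 ∈ J, ∑ j2 ∈ J, ∑ j3 ∈ J, ∑ j4 ∈ J, ∑ c : Fin N → X, (∏ j, P (c j)) *
        ((ind (c j1 = x) - P x) * (ind (c j2 = x) - P x) * (ind (c j3 = x) - P x) *
          (ind (c j4 = x) - P x))
      ≤ ∑ j1 ∈ J, ∑ j2 ∈ J, ∑ j3 ∈ J, ∑ j4 ∈ J,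
          (ind (j1 = j2) * ind (j3 = j4) + ind (j1 = j3) * ind (j2 = j4)
            + ind (j1 = j4) * ind (j2 = j3)) := by
        refine Finset.sum_le_sum fun j1 _ => Finset.sum_le_sum fun j2 _ =>
          Finset.sum_le_sum fun j3 _ => Finset.sum_le_sum fun j4 _ => ?_
        rw [inner_eq j1 j2 j3 j4]
        exact tuple_bound j1 j2 j3 j4
    _ = 3 * (J.card : ℝ)^2 := by
        simp only [Finset.sum_add_distrib]
        rw [hT1, hT2, hT3]; ring

/-- Chebyshev-type bound with the fourth moment, for a single letter and prefix length. -/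
lemma cheb (hP0 : ∀ a, 0 ≤ P a) (hP1 : ∑ a, P a = 1) (N i : ℕ) (hi1 : 1 ≤ i) (hiN : i ≤ N)
    (x : X) (δ : ℝ) (hδ : 0 < δ) :
    ∑ c : Fin N → X, (∏ j, P (c j)) * ind (δ < |P x - empPrefix c i x|)
      ≤ 3 / ((i:ℝ)^2 * δ^4) := by
  set J : Finset (Fin N) := Finset.univ.filter (fun j : Fin N => (j:ℕ) < i) with hJ
  have hJcard : J.card = i := card_filter_lt N i hiN
  have hipos : (0:ℝ) < (i:ℝ) := by exact_mod_cast hi1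
  have hcount : ∀ c : Fin N → X, (∑ j ∈ J, ind (c j = x))
      = ((Finset.univ.filter (fun j : Fin N => (j : ℕ) < i ∧ c j = x)).card : ℝ) := by
    intro c
    have hfilter : (Finset.univ.filter (fun j : Fin N => (j : ℕ) < i ∧ c j = x))
        = J.filter (fun j => c j = x) := by
      rw [hJ, Finset.filter_filter]
    rw [hfilter, Finset.card_filter]
    push_cast
    refine Finset.sum_congr rfl fun j _ => ?_
    by_cases h : c j = x <;> simp [h, ind]
  have habs : ∀ c : Fin N → X, |∑ j ∈ J, (ind (c j = x) - P x)|
      = (i:ℝ) * |P x - empPrefix c i x| := by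
    intro c
    rw [Finset.sum_sub_distrib, Finset.sum_const, hJcard, hcount, nsmul_eq_mul]
    rw [show (i:ℝ) * |P x - empPrefix c i x| = |(i:ℝ) * (P x - empPrefix c i x)| by
      rw [abs_mul, abs_of_nonneg hipos.le]]
    rw [abs_sub_comm]
    congr 1
    unfold empPrefix
    field_simp
  have point : ∀ c : Fin N → X, ind (δ < |P x - empPrefix c i x|)
      ≤ (∑ j ∈ J, (ind (c j = x) - P x))^4 / ((i:ℝ)*δ)^4 := by
    intro c
    by_cases h : δ < |P x - empPrefix c i x|
    · rw [ind_of _ h, le_div_iff₀ (by positivity), one_mul]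
      have hlow : (i:ℝ)*δ ≤ |∑ j ∈ J, (ind (c j = x) - P x)| := by
        rw [habs c]
        exact mul_le_mul_of_nonneg_left h.le hipos.le
      calc ((i:ℝ)*δ)^4 ≤ |∑ j ∈ J, (ind (c j = x) - P x)|^4 :=
            pow_le_pow_left₀ (by positivity) hlow 4
        _ = (∑ j ∈ J, (ind (c j = x) - P x))^4 := by
            rw [← abs_pow, abs_of_nonneg (by positivity)]
    · rw [ind_of_not _ h]; positivity
  have hw : ∀ c : Fin N → X, 0 ≤ ∏ j, P (c j) :=
    fun c => Finset.prod_nonneg fun j _ => hP0 _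
  calc ∑ c : Fin N → X, (∏ j, P (c j)) * ind (δ < |P x - empPrefix c i x|)
      ≤ ∑ c : Fin N → X, (∏ j, P (c j)) *
          ((∑ j ∈ J, (ind (c j = x) - P x))^4 / ((i:ℝ)*δ)^4) :=
        Finset.sum_le_sum fun c _ => mul_le_mul_of_nonneg_left (point c) (hw c)
    _ = (∑ c : Fin N → X, (∏ j, P (c j)) * (∑ j ∈ J, (ind (c j = x) - P x))^4)
          / ((i:ℝ)*δ)^4 := by
        rw [Finset.sum_div]
        exact Finset.sum_congr rfl fun c _ => by ring
    _ ≤ (3 * (J.card : ℝ)^2) / ((i:ℝ)*δ)^4 := by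
        apply div_le_div_of_nonneg_right ?_ (by positivity)
        exact moment4 hP0 hP1 N x J
    _ = 3 / ((i:ℝ)^2 * δ^4) := by
        rw [hJcard]
        field_simp

/-- Union bound over the alphabet for a single prefix length. -/
lemma per_i (hP0 : ∀ a, 0 ≤ P a) (hP1 : ∑ a, P a = 1) [Nonempty X]
    (N i : ℕ) (hi1 : 1 ≤ i) (hiN : i ≤ N) (ε : ℝ) (hε : 0 < ε) :
    ∑ c : Fin N → X, (∏ j, P (c j)) * ind (ε < ∑ x, |P x - empPrefix c i x|)
      ≤ 3 * (Fintype.card X : ℝ)^5 / ((i:ℝ)^2 * ε^4) := by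
  set K : ℝ := (Fintype.card X : ℝ) with hK
  have hK1 : 1 ≤ K := by
    rw [hK]; exact_mod_cast Fintype.card_pos
  have hKpos : 0 < K := lt_of_lt_of_le one_pos hK1
  have hδ : 0 < ε / K := div_pos hε hKpos
  have point : ∀ c : Fin N → X, ind (ε < ∑ x, |P x - empPrefix c i x|)
      ≤ ∑ x, ind (ε / K < |P x - empPrefix c i x|) := by
    intro c
    by_cases h : ε < ∑ x, |P x - empPrefix c i x|
    · have hex : ∃ x : X, ε / K < |P x - empPrefix c i x| := by
        by_contra hno
        push_neg at hno
        have : ∑ x, |P x - empPrefix c i x| ≤ ∑ _x : X, ε / K :=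
          Finset.sum_le_sum fun x _ => hno x
        rw [Finset.sum_const, Finset.card_univ, nsmul_eq_mul] at this
        have : ∑ x, |P x - empPrefix c i x| ≤ ε := by
          calc ∑ x, |P x - empPrefix c i x| ≤ K * (ε / K) := this
            _ = ε := by field_simp
        linarith
      obtain ⟨x0, hx0⟩ := hex
      rw [ind_of _ h]
      calc (1:ℝ) = ind (ε / K < |P x0 - empPrefix c i x0|) := (ind_of _ hx0).symm
        _ ≤ ∑ x, ind (ε / K < |P x - empPrefix c i x|) :=
          Finset.single_le_sum (f := fun x => ind (ε / K < |P x - empPrefix c i x|))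
            (fun x _ => ind_nonneg _) (Finset.mem_univ x0)
    · rw [ind_of_not _ h]
      exact Finset.sum_nonneg fun x _ => ind_nonneg _
  have hw : ∀ c : Fin N → X, 0 ≤ ∏ j, P (c j) :=
    fun c => Finset.prod_nonneg fun j _ => hP0 _
  calc ∑ c : Fin N → X, (∏ j, P (c j)) * ind (ε < ∑ x, |P x - empPrefix c i x|)
      ≤ ∑ c : Fin N → X, (∏ j, P (c j)) *
          ∑ x, ind (ε / K < |P x - empPrefix c i x|) :=
        Finset.sum_le_sum fun c _ => mul_le_mul_of_nonneg_left (point c) (hw c)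
    _ = ∑ x, ∑ c : Fin N → X, (∏ j, P (c j)) * ind (ε / K < |P x - empPrefix c i x|) := by
        simp_rw [Finset.mul_sum]
        exact Finset.sum_comm
    _ ≤ ∑ _x : X, 3 / ((i:ℝ)^2 * (ε / K)^4) :=
        Finset.sum_le_sum fun x _ => cheb hP0 hP1 N i hi1 hiN x (ε / K) hδ
    _ = K * (3 / ((i:ℝ)^2 * (ε / K)^4)) := by
        rw [Finset.sum_const, Finset.card_univ, nsmul_eq_mul]
    _ = 3 * K^5 / ((i:ℝ)^2 * ε^4) := by
        have hi0 : ((i:ℝ)) ≠ 0 := by positivity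
        field_simp

end Moments

/-- **Lemma 5 (prefix condition).** If `C₁,…,C_N` are i.i.d. `P`, the probability
that some prefix of length `i` with `N/ln N ≤ i ≤ N` has empirical distribution at
`L¹`-distance more than `1/ln N` from `P` tends to `0` as `N → ∞`. -/
theorem prefix_condition [Fintype X] (P : X → ℝ) (hP : IsDist P) :
    Filter.Tendsto
      (fun N : ℕ =>
        ∑ c : Fin N → X, (∏ j, P (c j)) *
          ind (∃ i : ℕ, (N : ℝ) / Real.log N ≤ (i : ℝ) ∧ i ≤ N ∧
            1 / Real.log N < ∑ x, |P x - empPrefix c i x|))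
      Filter.atTop (nhds 0) := by
  obtain ⟨hP0, hP1⟩ := hP
  have hw : ∀ (N : ℕ) (c : Fin N → X), 0 ≤ ∏ j, P (c j) :=
    fun N c => Finset.prod_nonneg fun j _ => hP0 _
  set F : ℕ → ℝ := fun N =>
    ∑ c : Fin N → X, (∏ j, P (c j)) *
      ind (∃ i : ℕ, (N : ℝ) / Real.log N ≤ (i : ℝ) ∧ i ≤ N ∧
        1 / Real.log N < ∑ x, |P x - empPrefix c i x|) with hF
  have hF0 : ∀ N, 0 ≤ F N :=
    fun N => Finset.sum_nonneg fun c _ => mul_nonneg (hw N c) (ind_nonneg _)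
  rcases isEmpty_or_nonempty X with hX | hX
  · -- empty alphabet : the function is eventually zero
    have hev : ∀ᶠ N : ℕ in Filter.atTop, F N = 0 := by
      filter_upwards [Filter.eventually_ge_atTop 1] with N hN
      rw [hF]
      have : IsEmpty (Fin N → X) := by
        have : 0 < N := hN
        exact ⟨fun c => (hX.false (c ⟨0, this⟩)).elim⟩
      simp [Finset.univ_eq_empty]
    exact (Filter.tendsto_congr' hev).mpr tendsto_const_nhds
  · -- main case
    set K : ℝ := (Fintype.card X : ℝ) with hK
    have hK1 : 1 ≤ K := by rw [hK]; exact_mod_cast Fintype.card_pos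
    have hKpos : (0:ℝ) < K := lt_of_lt_of_le one_pos hK1
    -- the explicit upper bound
    have hbound : ∀ N : ℕ, 3 ≤ N → F N ≤ 6 * K^5 * (Real.log N)^6 / N := by
      intro N hN3
      have hNpos : (0:ℝ) < N := by
        have : (0:ℕ) < N := by omega
        exact_mod_cast this
      have hN3' : (3:ℝ) ≤ N := by exact_mod_cast hN3
      have hlog1 : (1:ℝ) ≤ Real.log N := by
        have hexp3 : Real.exp 1 ≤ 3 := by
          have := Real.exp_one_lt_d9
          linarith
        calc (1:ℝ) = Real.log (Real.exp 1) := (Real.log_exp 1).symm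
          _ ≤ Real.log N := Real.log_le_log (Real.exp_pos 1) (le_trans hexp3 hN3')
      have hlogpos : (0:ℝ) < Real.log N := lt_of_lt_of_le one_pos hlog1
      have hεpos : (0:ℝ) < 1 / Real.log N := by positivity
      -- union bound over the prefix length
      have hub : ∀ c : Fin N → X,
          ind (∃ i : ℕ, (N : ℝ) / Real.log N ≤ (i : ℝ) ∧ i ≤ N ∧
            1 / Real.log N < ∑ x, |P x - empPrefix c i x|)
          ≤ ∑ i ∈ Finset.range (N+1), ind ((N : ℝ) / Real.log N ≤ (i : ℝ) ∧
            1 / Real.log N < ∑ x, |P x - empPrefix c i x|) := by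
        intro c
        by_cases h : ∃ i : ℕ, (N : ℝ) / Real.log N ≤ (i : ℝ) ∧ i ≤ N ∧
            1 / Real.log N < ∑ x, |P x - empPrefix c i x|
        · obtain ⟨i, h1, h2, h3⟩ := h
          rw [ind_of _ ⟨i, h1, h2, h3⟩]
          calc (1:ℝ) = ind ((N : ℝ) / Real.log N ≤ (i : ℝ) ∧
                1 / Real.log N < ∑ x, |P x - empPrefix c i x|) := (ind_of _ ⟨h1, h3⟩).symm
            _ ≤ _ := Finset.single_le_sum
                (f := fun i : ℕ => ind ((N : ℝ) / Real.log N ≤ (i : ℝ) ∧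
                  1 / Real.log N < ∑ x, |P x - empPrefix c i x|))
                (fun _ _ => ind_nonneg _) (Finset.mem_range.mpr (Nat.lt_succ_of_le h2))
        · rw [ind_of_not _ h]
          exact Finset.sum_nonneg fun _ _ => ind_nonneg _
      -- per-length bound
      have hper : ∀ i ∈ Finset.range (N+1),
          ∑ c : Fin N → X, (∏ j, P (c j)) * ind ((N : ℝ) / Real.log N ≤ (i : ℝ) ∧
            1 / Real.log N < ∑ x, |P x - empPrefix c i x|)
          ≤ 3 * K^5 * (Real.log N)^6 / (N:ℝ)^2 := by
        intro i hi
        have hiN : i ≤ N := Nat.lt_succ_iff.mp (Finset.mem_range.mp hi)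
        by_cases hMi : (N : ℝ) / Real.log N ≤ (i : ℝ)
        · have hi1 : 1 ≤ i := by
            by_contra hi0
            have : i = 0 := by omega
            rw [this] at hMi
            simp only [Nat.cast_zero] at hMi
            have : (0:ℝ) < (N:ℝ) / Real.log N := by positivity
            linarith
          have hNlog : (N:ℝ) ≤ (i:ℝ) * Real.log N := by
            rw [div_le_iff₀ hlogpos] at hMi
            exact hMi
          have hipos : (0:ℝ) < (i:ℝ) := by exact_mod_cast hi1
          calc ∑ c : Fin N → X, (∏ j, P (c j)) * ind ((N : ℝ) / Real.log N ≤ (i : ℝ) ∧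
                1 / Real.log N < ∑ x, |P x - empPrefix c i x|)
              ≤ ∑ c : Fin N → X, (∏ j, P (c j)) *
                ind (1 / Real.log N < ∑ x, |P x - empPrefix c i x|) :=
                Finset.sum_le_sum fun c _ => mul_le_mul_of_nonneg_left
                  (ind_le_ind fun hh => hh.2) (hw N c)
            _ ≤ 3 * K^5 / ((i:ℝ)^2 * (1 / Real.log N)^4) :=
                per_i hP0 hP1 N i hi1 hiN (1 / Real.log N) hεpos
            _ = 3 * K^5 * (Real.log N)^4 / (i:ℝ)^2 := by
                rw [div_pow, one_pow]
                field_simp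
            _ ≤ 3 * K^5 * (Real.log N)^6 / (N:ℝ)^2 := by
                rw [div_le_div_iff₀ (by positivity) (by positivity)]
                have hsq : (N:ℝ)^2 ≤ ((i:ℝ) * Real.log N)^2 := by
                  apply pow_le_pow_left₀ hNpos.le hNlog
                nlinarith [hsq, hlogpos, hK1, hipos,
                  mul_le_mul_of_nonneg_left hsq
                    (show (0:ℝ) ≤ 3 * K^5 * (Real.log N)^4 by positivity)]
        · have hzero : ∀ c : Fin N → X, ind ((N : ℝ) / Real.log N ≤ (i : ℝ) ∧
              1 / Real.log N < ∑ x, |P x - empPrefix c i x|) = 0 :=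
            fun c => ind_of_not _ (fun hh => hMi hh.1)
          calc ∑ c : Fin N → X, (∏ j, P (c j)) * ind ((N : ℝ) / Real.log N ≤ (i : ℝ) ∧
                1 / Real.log N < ∑ x, |P x - empPrefix c i x|)
              = 0 := by
                refine Finset.sum_eq_zero fun c _ => ?_
                rw [hzero c, mul_zero]
            _ ≤ 3 * K^5 * (Real.log N)^6 / (N:ℝ)^2 := by positivity
      -- assemble
      calc F N ≤ ∑ c : Fin N → X, (∏ j, P (c j)) *
            (∑ i ∈ Finset.range (N+1), ind ((N : ℝ) / Real.log N ≤ (i : ℝ) ∧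
              1 / Real.log N < ∑ x, |P x - empPrefix c i x|)) := by
            rw [hF]
            exact Finset.sum_le_sum fun c _ =>
              mul_le_mul_of_nonneg_left (hub c) (hw N c)
        _ = ∑ i ∈ Finset.range (N+1), ∑ c : Fin N → X, (∏ j, P (c j)) *
              ind ((N : ℝ) / Real.log N ≤ (i : ℝ) ∧
                1 / Real.log N < ∑ x, |P x - empPrefix c i x|) := by
            simp_rw [Finset.mul_sum]
            exact Finset.sum_comm
        _ ≤ ∑ _i ∈ Finset.range (N+1), 3 * K^5 * (Real.log N)^6 / (N:ℝ)^2 :=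
            Finset.sum_le_sum hper
        _ = ((N:ℝ) + 1) * (3 * K^5 * (Real.log N)^6 / (N:ℝ)^2) := by
            rw [Finset.sum_const, Finset.card_range, nsmul_eq_mul]
            push_cast
            ring
        _ ≤ (2 * (N:ℝ)) * (3 * K^5 * (Real.log N)^6 / (N:ℝ)^2) := by
            apply mul_le_mul_of_nonneg_right ?_ (by positivity)
            linarith
        _ = 6 * K^5 * (Real.log N)^6 / N := by
            field_simp
            ring
    -- limit of the bound
    have hB : Filter.Tendsto (fun N : ℕ => 6 * K^5 * (Real.log N)^6 / N)
        Filter.atTop (nhds 0) := by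
      have h1 : Filter.Tendsto (fun x : ℝ => Real.log x ^ 6 / (1 * x + 0))
          Filter.atTop (nhds 0) :=
        Real.tendsto_pow_log_div_mul_add_atTop 1 0 6 one_ne_zero
      have h2 : Filter.Tendsto (fun N : ℕ => Real.log N ^ 6 / (1 * (N:ℝ) + 0))
          Filter.atTop (nhds 0) := h1.comp tendsto_natCast_atTop_atTop
      have h3 := h2.const_mul (6 * K^5)
      rw [mul_zero] at h3
      apply h3.congr
      intro N
      ring
    exact squeeze_zero' (Filter.Eventually.of_forall hF0)
      (by filter_upwards [Filter.eventually_ge_atTop 3] with N hN using hbound N hN) hB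

end Async
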